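/- Let z be a real number with 0 < |z| < π. Then (sin z)/z · (1/(1 - (2/3)sin²(z/2))) - 1 < 0, i.e. the function (sin z)/z is strictly smaller than 1 - (2/3)sin²(z/2) in absolute-value-wise sense on (0,π); equivalently sin z · (1 - (2/3)sin²(z/2))^{-1} < z for 0 < z < π. -/

import Mathlib

open Real

lemma key_deriv (x : ℝ) :
    HasDerivAt (fun z : ℝ => z * (2 + Real.cos z) - 3 * Real.sin z)
      (2 - 2 * Real.cos x - x * Real.sin x) x := by
  have h1 : HasDerivAt (fun z : ℝ => z * (2 + Real.cos z))
      (1 * (2 + Real.cos x) + x * (-Real.sin x)) x :=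
    (hasDerivAt_id x).mul ((Real.hasDerivAt_cos x).const_add 2)
  have h2 : HasDerivAt (fun z : ℝ => 3 * Real.sin z) (3 * Real.cos x) x :=
    (Real.hasDerivAt_sin x).const_mul 3
  have := h1.sub h2
  exact this.congr_deriv (by ring)

lemma key (z : ℝ) (h0 : 0 < z) (h1 : z < Real.pi) :
    3 * Real.sin z < z * (2 + Real.cos z) := by
  set f : ℝ → ℝ := fun z => z * (2 + Real.cos z) - 3 * Real.sin z with hf
  have hmono : StrictMonoOn f (Set.Icc 0 Real.pi) := by
    apply strictMonoOn_of_deriv_pos (convex_Icc 0 Real.pi)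
    · fun_prop
    · intro x hx
      rw [interior_Icc] at hx
      rw [(key_deriv x).deriv]
      have hx0 := hx.1
      have hxpi := hx.2
      have hs : 0 < Real.sin (x/2) := Real.sin_pos_of_pos_of_lt_pi (by linarith) (by linarith [Real.pi_pos])
      have hc : 0 < Real.cos (x/2) := Real.cos_pos_of_mem_Ioo ⟨by linarith [Real.pi_pos], by linarith⟩
      have ht : x/2 < Real.tan (x/2) := Real.lt_tan (by linarith) (by linarith)
      rw [Real.tan_eq_sin_div_cos, lt_div_iff₀ hc] at ht
      have hcos : Real.cos x = 1 - 2 * Real.sin (x/2) ^ 2 := by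
        have h1 := Real.cos_two_mul (x/2)
        have h2 := Real.sin_sq_add_cos_sq (x/2)
        have hx2 : 2 * (x/2) = x := by ring
        rw [hx2] at h1
        nlinarith
      have hsin : Real.sin x = 2 * Real.sin (x/2) * Real.cos (x/2) := by
        rw [← Real.sin_two_mul]; ring_nf
      rw [hcos, hsin]
      nlinarith
  have := hmono (Set.left_mem_Icc.mpr Real.pi_pos.le) ⟨h0.le, h1.le⟩ h0
  simp [hf] at this
  linarith

theorem stmt_0 (z : ℝ) (h0 : 0 < |z|) (hpi : |z| < Real.pi) :
    Real.sin z / z * (1 / (1 - (2/3) * Real.sin (z/2) ^ 2)) - 1 < 0 := by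
  have hs2 : Real.sin (z/2) ^ 2 ≤ 1 := Real.sin_sq_le_one _
  have hD : (0:ℝ) < 1 - (2/3) * Real.sin (z/2) ^ 2 := by nlinarith
  rw [sub_neg, mul_one_div, div_lt_one hD]
  have main : ∀ w : ℝ, 0 < w → w < Real.pi →
      Real.sin w / w < 1 - 2/3 * Real.sin (w/2) ^ 2 := by
    intro w hw hwpi
    rw [div_lt_iff₀ hw]
    have hk := key w hw hwpi
    have hcos : Real.cos w = 1 - 2 * Real.sin (w/2) ^ 2 := by
      have h1 := Real.cos_two_mul (w/2)
      have h2 := Real.sin_sq_add_cos_sq (w/2)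
      have hw2 : 2 * (w/2) = w := by ring
      rw [hw2] at h1
      nlinarith
    rw [hcos] at hk
    nlinarith
  rcases lt_or_gt_of_ne (fun h => by simp [h] at h0 : z ≠ 0) with hz | hz
  · rw [abs_of_neg hz] at hpi
    have := main (-z) (by linarith) hpi
    have e1 : Real.sin (-z) / (-z) = Real.sin z / z := by
      rw [Real.sin_neg, neg_div_neg_eq]
    have e2 : Real.sin (-z/2) ^ 2 = Real.sin (z/2) ^ 2 := by
      rw [neg_div, Real.sin_neg]; ring
    rw [e1, e2] at this
    linarith
  · rw [abs_of_pos hz] at hpi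
    have := main z hz hpi
    linarith
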